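/- Define h(r) = r³/δ⁴ − 2r²/δ³ + 2/δ for r ≤ δ and h(r) = 1/r for r > δ. Then h'' < 0 on the interval (2δ/3, ∞); in particular h' is strictly increasing there, and consequently the map y ↦ ∇_x c_δ(x,y) = h'(|x−y|)(x−y)/|x−y| is injective on {y : |y−x| > 2δ/3} for each fixed x ∈ ℝᵈ. -/

import Mathlib

open Set

/-- For the modified Coulomb profile `h`, the derivative `h'` is strictly
increasing on `(2δ/3, ∞)`; consequently, for each fixed `x`, the map
`y ↦ ∇_x c_δ(x,y) = h'(|x−y|) (x−y)/|x−y|` is injective on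
`{y : |y−x| > 2δ/3}`. -/
theorem modified_coulomb_twist (d : ℕ) (δ : ℝ) (hδ : 0 < δ) (h : ℝ → ℝ)
    (hdef₁ : ∀ r : ℝ, r ≤ δ → h r = r ^ 3 / δ ^ 4 - 2 * r ^ 2 / δ ^ 3 + 2 / δ)
    (hdef₂ : ∀ r : ℝ, δ < r → h r = 1 / r) :
    StrictMonoOn (deriv h) (Ioi (2 * δ / 3)) ∧
    ∀ x : EuclideanSpace ℝ (Fin d),
      Set.InjOn
        (fun y : EuclideanSpace ℝ (Fin d) =>
          (deriv h ‖x - y‖ / ‖x - y‖) • (x - y))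
        {y : EuclideanSpace ℝ (Fin d) | 2 * δ / 3 < ‖y - x‖} := by
  set φ : ℝ → ℝ := fun r => if r ≤ δ then 3 * r ^ 2 / δ ^ 4 - 4 * r / δ ^ 3
    else -(1 / r ^ 2) with hφdef
  have hδ4 : (0:ℝ) < δ ^ 4 := by positivity
  have hδ3 : (0:ℝ) < δ ^ 3 := by positivity
  -- derivative of the cubic piece
  have hcube : ∀ r : ℝ, HasDerivAt (fun s => s ^ 3 / δ ^ 4 - 2 * s ^ 2 / δ ^ 3 + 2 / δ)
      (3 * r ^ 2 / δ ^ 4 - 4 * r / δ ^ 3) r := by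
    intro r
    have h1 : HasDerivAt (fun s : ℝ => s ^ 3 / δ ^ 4) (3 * r ^ 2 / δ ^ 4) r := by
      simpa using (hasDerivAt_pow 3 r).div_const (δ ^ 4)
    have h2 : HasDerivAt (fun s : ℝ => 2 * s ^ 2 / δ ^ 3) (4 * r / δ ^ 3) r := by
      have := ((hasDerivAt_pow 2 r).const_mul 2).div_const (δ ^ 3)
      refine this.congr_deriv ?_
      push_cast
      ring
    exact (h1.sub h2).add_const (2 / δ)
  have hinv : ∀ r : ℝ, r ≠ 0 → HasDerivAt (fun s : ℝ => 1 / s) (-(1 / r ^ 2)) r := by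
    intro r hr
    have := hasDerivAt_inv hr
    simpa [one_div] using this
  -- deriv h = φ on (2δ/3, ∞) (in fact everywhere on (0,∞) minus nothing, we do cases)
  have hderiv : ∀ r : ℝ, 0 < r → deriv h r = φ r := by
    intro r hr
    rcases lt_trichotomy r δ with hlt | heq | hgt
    · have hev : h =ᶠ[nhds r] fun s => s ^ 3 / δ ^ 4 - 2 * s ^ 2 / δ ^ 3 + 2 / δ := by
        filter_upwards [Iio_mem_nhds hlt] with s hs
        exact hdef₁ s (le_of_lt hs)
      rw [hev.deriv_eq, (hcube r).deriv, hφdef]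
      simp [le_of_lt hlt]
    · rw [heq]
      have hδ0 : δ ≠ 0 := ne_of_gt hδ
      have hval : 3 * δ ^ 2 / δ ^ 4 - 4 * δ / δ ^ 3 = -(1 / δ ^ 2) := by
        field_simp
        ring
      have hvalh : h δ = 1 / δ := by
        rw [hdef₁ δ le_rfl]
        field_simp
        ring
      have hleft : HasDerivWithinAt h (-(1 / δ ^ 2)) (Iic δ) δ := by
        have := ((hcube δ).hasDerivWithinAt (s := Iic δ)).congr
          (fun s hs => hdef₁ s hs) (hdef₁ δ le_rfl)
        rwa [hval] at this
      have hright : HasDerivWithinAt h (-(1 / δ ^ 2)) (Ici δ) δ := by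
        refine ((hinv δ hδ0).hasDerivWithinAt (s := Ici δ)).congr
          (fun s hs => ?_) hvalh
        rcases eq_or_lt_of_le (Set.mem_Ici.mp hs) with hsr | hsr
        · rw [← hsr]; exact hvalh
        · exact hdef₂ s hsr
      have hd : HasDerivAt h (-(1 / δ ^ 2)) δ := by
        have := hleft.union hright
        rwa [Iic_union_Ici, hasDerivWithinAt_univ] at this
      rw [hd.deriv, hφdef]
      simp only [le_refl, if_pos]
      exact hval.symm
    · have hev : h =ᶠ[nhds r] fun s => 1 / s := by
        filter_upwards [Ioi_mem_nhds hgt] with s hs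
        exact hdef₂ s hs
      rw [hev.deriv_eq, (hinv r (ne_of_gt hr)).deriv, hφdef]
      simp [not_le.mpr hgt]
  have hpos : ∀ r : ℝ, 2 * δ / 3 < r → 0 < r := fun r hr => lt_trans (by positivity) hr
  have he : ∀ t : ℝ, 3 * t ^ 2 / δ ^ 4 - 4 * t / δ ^ 3 = (3 * t ^ 2 - 4 * t * δ) / δ ^ 4 := by
    intro t
    field_simp
  -- φ is strictly monotone on (2δ/3, ∞)
  have hmono : ∀ a b : ℝ, 2 * δ / 3 < a → a < b → φ a < φ b := by
    intro a b ha hab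
    have ha0 : 0 < a := hpos a ha
    have hb0 : 0 < b := lt_trans ha0 hab
    rw [hφdef]
    dsimp only
    split_ifs with h1 h2 h2
    · rw [he a, he b]
      have key : 3 * a ^ 2 - 4 * a * δ < 3 * b ^ 2 - 4 * b * δ := by nlinarith
      exact div_lt_div_of_pos_right key hδ4
    · -- a ≤ δ < b
      have hb : δ < b := lt_of_not_ge h2
      have step1 : 3 * a ^ 2 / δ ^ 4 - 4 * a / δ ^ 3 ≤ -(1 / δ ^ 2) := by
        rw [he a]
        rw [div_le_iff₀ hδ4]
        have e2 : -(1 / δ ^ 2) * δ ^ 4 = -δ ^ 2 := by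
          field_simp
        rw [e2]
        have : (3 * a - δ) * (a - δ) ≤ 0 :=
          mul_nonpos_of_nonneg_of_nonpos (by linarith) (by linarith)
        nlinarith
      have step2 : -(1 / δ ^ 2) < -(1 / b ^ 2) := by
        have : 1 / b ^ 2 < 1 / δ ^ 2 := by
          apply one_div_lt_one_div_of_lt (by positivity)
          nlinarith
        linarith
      linarith
    · exact absurd h2 (not_le.mpr ((lt_of_not_ge h1).trans hab))
    · have hb : δ < b := lt_of_not_ge h2
      have ha' : δ < a := lt_of_not_ge h1
      have : 1 / b ^ 2 < 1 / a ^ 2 := by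
        apply one_div_lt_one_div_of_lt (by positivity)
        nlinarith
      linarith
  -- φ is negative on (2δ/3, ∞)
  have hneg : ∀ r : ℝ, 2 * δ / 3 < r → φ r < 0 := by
    intro r hr
    have hr0 : 0 < r := hpos r hr
    rw [hφdef]
    dsimp only
    split_ifs with h1
    · rw [he r, div_neg_iff]
      right
      constructor
      · nlinarith
      · exact hδ4
    · simp only [neg_neg_iff_pos]
      positivity
  have hSM : StrictMonoOn (deriv h) (Ioi (2 * δ / 3)) := by
    intro a ha b hb hab
    rw [hderiv a (hpos a ha), hderiv b (hpos b hb)]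
    exact hmono a b ha hab
  refine ⟨hSM, ?_⟩
  intro x y₁ hy₁ y₂ hy₂ heq
  simp only [Set.mem_setOf_eq] at hy₁ hy₂
  dsimp only at heq
  rw [norm_sub_rev] at hy₁ hy₂
  have hr₁ : 0 < ‖x - y₁‖ := hpos _ hy₁
  have hr₂ : 0 < ‖x - y₂‖ := hpos _ hy₂
  -- take norms
  have hnorm : |deriv h ‖x - y₁‖| = |deriv h ‖x - y₂‖| := by
    have := congrArg norm heq
    simp only [norm_smul, Real.norm_eq_abs, abs_div, abs_norm] at this
    rw [div_mul_cancel₀ _ (ne_of_gt hr₁), div_mul_cancel₀ _ (ne_of_gt hr₂)] at this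
    exact this
  have hn₁ : deriv h ‖x - y₁‖ < 0 := by
    rw [hderiv _ hr₁]; exact hneg _ hy₁
  have hn₂ : deriv h ‖x - y₂‖ < 0 := by
    rw [hderiv _ hr₂]; exact hneg _ hy₂
  have hdeq : deriv h ‖x - y₁‖ = deriv h ‖x - y₂‖ := by
    rw [abs_of_neg hn₁, abs_of_neg hn₂] at hnorm
    linarith
  have hreq : ‖x - y₁‖ = ‖x - y₂‖ :=
    hSM.injOn hy₁ hy₂ hdeq
  rw [hreq] at heq
  have hc : deriv h ‖x - y₂‖ / ‖x - y₂‖ ≠ 0 :=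
    div_ne_zero (ne_of_lt hn₂) (ne_of_gt hr₂)
  have h' : x - y₁ = x - y₂ := smul_right_injective (EuclideanSpace ℝ (Fin d)) hc heq
  have := sub_right_injective h'
  exact this
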